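/- (Quasinormality characterized by c = 1.) Let A be a bounded nonzero operator on a complex Hilbert space H and E the spectral measure of |A|. Then A is quasinormal if and only if ⟨E(σ)|A|f, |A|f⟩ ≤ ⟨E(σ)Af, Af⟩ for all Borel sets σ ⊆ ℝ₊ and all f ∈ H. -/

import Mathlib

open ContinuousLinearMap MeasureTheory

local notation "⟪" x ", " y "⟫" => @inner ℂ _ _ x y

/-- `E` is the spectral measure of the (bounded, positive) operator `D`, together with the
associated family of scalar Borel measures `μ f = ⟨E(·)f, f⟩`. -/
structure IsSpectralMeasure {H : Type*} [NormedAddCommGroup H] [InnerProductSpace ℂ H]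
    [CompleteSpace H] (D : H →L[ℂ] H) (E : Set ℝ → H →L[ℂ] H)
    (μ : H → Measure ℝ) : Prop where
  selfadj : ∀ σ : Set ℝ, MeasurableSet σ → ContinuousLinearMap.adjoint (E σ) = E σ
  inter : ∀ σ τ : Set ℝ, MeasurableSet σ → MeasurableSet τ → E σ ∘L E τ = E (σ ∩ τ)
  univ : E Set.univ = 1
  support_nonneg : E (Set.Iio 0) = 0
  compat : ∀ (f : H) (σ : Set ℝ), MeasurableSet σ → (μ f σ).toReal = (⟪E σ f, f⟫).re
  finite : ∀ f, IsFiniteMeasure (μ f)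
  moment_int : ∀ f, Integrable (fun x => x ^ 2) (μ f)
  moment1 : ∀ f : H, (⟪D f, f⟫).re = ∫ x, x ∂(μ f)
  moment2 : ∀ f : H, ‖D f‖ ^ 2 = ∫ x, x ^ 2 ∂(μ f)

set_option linter.unusedSectionVars false

section Aux
variable {H : Type*} [NormedAddCommGroup H] [InnerProductSpace ℂ H] [CompleteSpace H]

lemma inner_sa {B : H →L[ℂ] H} (hB : ContinuousLinearMap.adjoint B = B) (x y : H) :
    ⟪B x, y⟫ = ⟪x, B y⟫ := by
  conv_lhs => rw [← hB]
  exact ContinuousLinearMap.adjoint_inner_left B y x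

lemma eq_of_re_inner {x y : H} (h : ∀ g : H, (⟪x, g⟫).re = (⟪y, g⟫).re) : x = y := by
  have h2 : (⟪x - y, x - y⟫) = 0 := by
    apply Complex.ext
    · have := h (x - y)
      simp only [inner_sub_left, Complex.sub_re, Complex.zero_re]
      linarith
    · exact inner_self_im (𝕜 := ℂ) (x - y)
  exact sub_eq_zero.mp (inner_self_eq_zero (𝕜 := ℂ) (x := x - y) |>.mp h2)

lemma im_inner_sa {B : H →L[ℂ] H} (hB : ContinuousLinearMap.adjoint B = B) (f : H) :
    (⟪B f, f⟫).im = 0 := by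
  have h1 : ⟪B f, f⟫ = (starRingEnd ℂ) ⟪B f, f⟫ := by
    conv_lhs => rw [inner_sa hB, ← inner_conj_symm]
  have := congrArg Complex.im h1
  simp only [Complex.conj_im] at this
  linarith

lemma re_expand_add {B : H →L[ℂ] H} (hB : ContinuousLinearMap.adjoint B = B) (u v : H) :
    (⟪B (u + v), u + v⟫).re
      = (⟪B u, u⟫).re + 2 * (⟪B u, v⟫).re + (⟪B v, v⟫).re := by
  have hvu : ⟪B v, u⟫ = (starRingEnd ℂ) ⟪B u, v⟫ := by
    rw [inner_sa hB v u, ← inner_conj_symm]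
  simp only [map_add, inner_add_left, inner_add_right, hvu, Complex.add_re, Complex.conj_re]
  ring

lemma re_expand_sub {B : H →L[ℂ] H} (hB : ContinuousLinearMap.adjoint B = B) (u v : H) :
    (⟪B (u - v), u - v⟫).re
      = (⟪B u, u⟫).re - 2 * (⟪B u, v⟫).re + (⟪B v, v⟫).re := by
  have hvu : ⟪B v, u⟫ = (starRingEnd ℂ) ⟪B u, v⟫ := by
    rw [inner_sa hB v u, ← inner_conj_symm]
  simp only [map_sub, inner_sub_left, inner_sub_right, hvu, Complex.sub_re, Complex.add_re,
    Complex.conj_re]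
  ring

lemma clm_eq_of_inner_map {S T : H →L[ℂ] H} (h : ∀ f, ⟪S f, f⟫ = ⟪T f, f⟫) : S = T := by
  have := (ext_inner_map (S : H →ₗ[ℂ] H) (T : H →ₗ[ℂ] H)).mp (fun x => h x)
  exact ContinuousLinearMap.coe_injective this

lemma spectral_comm {D : H →L[ℂ] H} {E : Set ℝ → H →L[ℂ] H} {μ : H → Measure ℝ}
    (hD : ContinuousLinearMap.adjoint D = D)
    (hE : IsSpectralMeasure D E μ) {σ : Set ℝ} (hσ : MeasurableSet σ) :
    E σ ∘L D = D ∘L E σ := by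
  have hfin := hE.finite
  have hP := hE.selfadj σ hσ
  -- integrability of the identity
  have hint : ∀ u : H, Integrable (fun x : ℝ => x) (μ u) := by
    intro u
    have := hE.finite u
    have h1 : Integrable (fun x : ℝ => 1 + x ^ 2) (μ u) :=
      (integrable_const 1).add (hE.moment_int u)
    refine h1.mono' aestronglyMeasurable_id ?_
    filter_upwards with x
    rw [Real.norm_eq_abs]
    nlinarith [sq_nonneg (|x| - 1), sq_abs x]
  -- the measure identity
  have hmeas : ∀ f g : H,
      μ (E σ f + g) + μ (f - E σ g) = μ (f + E σ g) + μ (E σ f - g) := by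
    intro f g
    ext τ hτ
    have hts : ∀ x, E τ (E σ x) = E (τ ∩ σ) x := fun x =>
      ContinuousLinearMap.ext_iff.mp (hE.inter τ σ hτ hσ) x
    have hst : ∀ x, E σ (E τ x) = E (τ ∩ σ) x := by
      intro x
      have := ContinuousLinearMap.ext_iff.mp (hE.inter σ τ hσ hτ) x
      rwa [Set.inter_comm σ τ] at this
    have hcross1 : ⟪E τ (E σ f), g⟫ = ⟪E τ f, E σ g⟫ := by
      rw [← inner_sa hP (E τ f) g, hst, hts]
    have hcross2 : ⟪E τ g, E σ f⟫ = ⟪E τ (E σ g), f⟫ := by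
      rw [← inner_sa hP (E τ g) f, hst, hts]
    have key : ⟪E τ (E σ f + g), E σ f + g⟫ + ⟪E τ (f - E σ g), f - E σ g⟫
        = ⟪E τ (f + E σ g), f + E σ g⟫ + ⟪E τ (E σ f - g), E σ f - g⟫ := by
      simp only [map_add, map_sub, inner_add_left, inner_add_right, inner_sub_left,
        inner_sub_right]
      rw [← hcross1, ← hcross2]
      ring
    have hre := congrArg Complex.re key
    simp only [Complex.add_re] at hre
    rw [← hE.compat (E σ f + g) τ hτ, ← hE.compat (f - E σ g) τ hτ,
      ← hE.compat (f + E σ g) τ hτ, ← hE.compat (E σ f - g) τ hτ] at hre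
    have e1 := ENNReal.ofReal_toReal (measure_ne_top (μ (E σ f + g)) τ)
    have e2 := ENNReal.ofReal_toReal (measure_ne_top (μ (f - E σ g)) τ)
    have e3 := ENNReal.ofReal_toReal (measure_ne_top (μ (f + E σ g)) τ)
    have e4 := ENNReal.ofReal_toReal (measure_ne_top (μ (E σ f - g)) τ)
    rw [Measure.add_apply, Measure.add_apply, ← e1, ← e2, ← e3, ← e4,
      ← ENNReal.ofReal_add ENNReal.toReal_nonneg ENNReal.toReal_nonneg,
      ← ENNReal.ofReal_add ENNReal.toReal_nonneg ENNReal.toReal_nonneg, hre]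
  -- integrate
  have hmom : ∀ f g : H,
      (⟪D (E σ f + g), E σ f + g⟫).re + (⟪D (f - E σ g), f - E σ g⟫).re
        = (⟪D (f + E σ g), f + E σ g⟫).re + (⟪D (E σ f - g), E σ f - g⟫).re := by
    intro f g
    have h := congrArg (fun m => ∫ x, x ∂m) (hmeas f g)
    rw [integral_add_measure (hint _) (hint _), integral_add_measure (hint _) (hint _)] at h
    rw [hE.moment1 (E σ f + g), hE.moment1 (f - E σ g), hE.moment1 (f + E σ g),
      hE.moment1 (E σ f - g)]
    exact h
  have hcomm_re : ∀ f g : H, (⟪D (E σ f), g⟫).re = (⟪D f, E σ g⟫).re := by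
    intro f g
    have h := hmom f g
    rw [re_expand_add hD, re_expand_sub hD, re_expand_add hD, re_expand_sub hD] at h
    linarith
  ext f
  simp only [ContinuousLinearMap.comp_apply]
  symm
  apply eq_of_re_inner
  intro g
  rw [hcomm_re f g, inner_sa hP (D f) g]

lemma spectral_compl {D : H →L[ℂ] H} {E : Set ℝ → H →L[ℂ] H} {μ : H → Measure ℝ}
    (hE : IsSpectralMeasure D E μ) {σ : Set ℝ} (hσ : MeasurableSet σ) :
    E σ + E σᶜ = 1 := by
  apply clm_eq_of_inner_map
  intro f
  have hre : (⟪E σ f, f⟫).re + (⟪E σᶜ f, f⟫).re = (⟪(1 : H →L[ℂ] H) f, f⟫).re := by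
    rw [← hE.compat f σ hσ, ← hE.compat f σᶜ hσ.compl]
    have := hE.finite f
    have h1 : (μ f σ).toReal + (μ f σᶜ).toReal = (μ f Set.univ).toReal := by
      rw [← ENNReal.toReal_add (measure_ne_top _ _) (measure_ne_top _ _),
        measure_add_measure_compl hσ]
    rw [h1, hE.compat f Set.univ MeasurableSet.univ, hE.univ]
  have him1 := im_inner_sa (hE.selfadj σ hσ) f
  have him2 := im_inner_sa (hE.selfadj σᶜ hσ.compl) f
  have him3 : (⟪(1 : H →L[ℂ] H) f, f⟫).im = 0 := by
    simp only [ContinuousLinearMap.one_apply]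
    exact inner_self_im (𝕜 := ℂ) f
  apply Complex.ext
  · simpa only [ContinuousLinearMap.add_apply, inner_add_left, Complex.add_re] using hre
  · simp only [ContinuousLinearMap.add_apply, inner_add_left, Complex.add_im, him1, him2,
      him3, add_zero]

end Aux

/-- A nonzero bounded operator `A` is quasinormal (commutes with the spectral measure `E`
of `|A|`) if and only if `⟨E(σ)|A|f, |A|f⟩ ≤ ⟨E(σ)Af, Af⟩` for all Borel `σ` and `f`. -/
theorem quasinormal_iff_ineq_c_one {H : Type*} [NormedAddCommGroup H]
    [InnerProductSpace ℂ H] [CompleteSpace H]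
    (A absA : H →L[ℂ] H) (hA : A ≠ 0)
    (habs_pos : absA.IsPositive)
    (habs_sq : absA ∘L absA = ContinuousLinearMap.adjoint A ∘L A)
    (E : Set ℝ → H →L[ℂ] H) (μ : H → Measure ℝ)
    (hE : IsSpectralMeasure absA E μ) :
    (∀ σ : Set ℝ, MeasurableSet σ → E σ ∘L A = A ∘L E σ) ↔
      (∀ (σ : Set ℝ), MeasurableSet σ → ∀ f : H,
        (⟪E σ (absA f), absA f⟫).re ≤ (⟪E σ (A f), A f⟫).re) := by
  have hBsa : ContinuousLinearMap.adjoint absA = absA := habs_pos.isSelfAdjoint.adjoint_eq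
  have hsq : ∀ x : H, absA (absA x) = ContinuousLinearMap.adjoint A (A x) := by
    intro x
    have := ContinuousLinearMap.ext_iff.mp habs_sq x
    simpa only [ContinuousLinearMap.comp_apply] using this
  constructor
  · -- quasinormal ⇒ inequality (in fact equality)
    intro hcomm σ hσ f
    have hP := hE.selfadj σ hσ
    have hP2 : ∀ x, E σ (E σ x) = E σ x := by
      intro x
      have := ContinuousLinearMap.ext_iff.mp (hE.inter σ σ hσ hσ) x
      simpa only [ContinuousLinearMap.comp_apply, Set.inter_self] using this
    have hproj : ∀ x : H, ⟪E σ x, x⟫ = ⟪E σ x, E σ x⟫ := by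
      intro x
      calc ⟪E σ x, x⟫ = ⟪x, E σ x⟫ := inner_sa hP x x
        _ = ⟪x, E σ (E σ x)⟫ := by rw [hP2]
        _ = ⟪E σ x, E σ x⟫ := (inner_sa hP x (E σ x)).symm
    have hc : ∀ x, E σ (A x) = A (E σ x) := fun x => by
      have := ContinuousLinearMap.ext_iff.mp (hcomm σ hσ) x
      simpa only [ContinuousLinearMap.comp_apply] using this
    have hBc : ∀ x, E σ (absA x) = absA (E σ x) := fun x => by
      have := ContinuousLinearMap.ext_iff.mp (spectral_comm hBsa hE hσ) x
      simpa only [ContinuousLinearMap.comp_apply] using this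
    have key : ⟪E σ (A f), A f⟫ = ⟪E σ (absA f), absA f⟫ := by
      calc ⟪E σ (A f), A f⟫ = ⟪E σ (A f), E σ (A f)⟫ := hproj (A f)
        _ = ⟪A (E σ f), A (E σ f)⟫ := by rw [hc f]
        _ = ⟪E σ f, ContinuousLinearMap.adjoint A (A (E σ f))⟫ :=
            (ContinuousLinearMap.adjoint_inner_right A (E σ f) (A (E σ f))).symm
        _ = ⟪E σ f, absA (absA (E σ f))⟫ := by rw [hsq]
        _ = ⟪E σ f, absA (E σ (absA f))⟫ := by rw [hBc f]
        _ = ⟪E σ f, E σ (absA (absA f))⟫ := by rw [hBc (absA f)]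
        _ = ⟪E σ (E σ f), absA (absA f)⟫ := (inner_sa hP (E σ f) (absA (absA f))).symm
        _ = ⟪E σ f, absA (absA f)⟫ := by rw [hP2]
        _ = ⟪absA (E σ f), absA f⟫ := (inner_sa hBsa (E σ f) (absA f)).symm
        _ = ⟪E σ (absA f), absA f⟫ := by rw [hBc f]
    exact le_of_eq (congrArg Complex.re key.symm)
  · -- inequality ⇒ quasinormal
    intro hineq σ hσ
    have hP := hE.selfadj σ hσ
    have hP2 : ∀ x, E σ (E σ x) = E σ x := by
      intro x
      have := ContinuousLinearMap.ext_iff.mp (hE.inter σ σ hσ hσ) x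
      simpa only [ContinuousLinearMap.comp_apply, Set.inter_self] using this
    have hproj : ∀ x : H, ⟪E σ x, x⟫ = ⟪E σ x, E σ x⟫ := by
      intro x
      calc ⟪E σ x, x⟫ = ⟪x, E σ x⟫ := inner_sa hP x x
        _ = ⟪x, E σ (E σ x)⟫ := by rw [hP2]
        _ = ⟪E σ x, E σ x⟫ := (inner_sa hP x (E σ x)).symm
    have hBc : ∀ x, E σ (absA x) = absA (E σ x) := fun x => by
      have := ContinuousLinearMap.ext_iff.mp (spectral_comm hBsa hE hσ) x
      simpa only [ContinuousLinearMap.comp_apply] using this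
    -- total equality
    have htot : ∀ f : H, ⟪absA f, absA f⟫ = ⟪A f, A f⟫ := by
      intro f
      rw [inner_sa hBsa f (absA f), hsq f, ContinuousLinearMap.adjoint_inner_right]
    -- equality of real parts for σ
    have heqre : ∀ f : H, (⟪E σ (absA f), absA f⟫).re = (⟪E σ (A f), A f⟫).re := by
      intro f
      have h1 := hineq σ hσ f
      have h2 := hineq σᶜ hσ.compl f
      have hsplit := spectral_compl hE hσ
      have hB' : ⟪E σ (absA f), absA f⟫ + ⟪E σᶜ (absA f), absA f⟫ = ⟪absA f, absA f⟫ := by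
        rw [← inner_add_left, ← ContinuousLinearMap.add_apply, hsplit,
          ContinuousLinearMap.one_apply]
      have hA' : ⟪E σ (A f), A f⟫ + ⟪E σᶜ (A f), A f⟫ = ⟪A f, A f⟫ := by
        rw [← inner_add_left, ← ContinuousLinearMap.add_apply, hsplit,
          ContinuousLinearMap.one_apply]
      have rb := congrArg Complex.re hB'
      have ra := congrArg Complex.re hA'
      have rt := congrArg Complex.re (htot f)
      rw [Complex.add_re] at rb ra
      linarith
    have heqC : ∀ f : H, ⟪E σ (absA f), absA f⟫ = ⟪E σ (A f), A f⟫ := by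
      intro f
      apply Complex.ext (heqre f)
      rw [im_inner_sa hP (absA f), im_inner_sa hP (A f)]
    -- operator identity A† P A = B P B
    have hop : ContinuousLinearMap.adjoint A ∘L (E σ ∘L A) = absA ∘L (E σ ∘L absA) := by
      apply clm_eq_of_inner_map
      intro f
      simp only [ContinuousLinearMap.comp_apply]
      rw [ContinuousLinearMap.adjoint_inner_left, inner_sa hBsa]
      exact (heqC f).symm
    have hopx : ∀ f : H,
        ContinuousLinearMap.adjoint A (E σ (A f)) = absA (E σ (absA f)) := by
      intro f
      have := ContinuousLinearMap.ext_iff.mp hop f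
      simpa only [ContinuousLinearMap.comp_apply] using this
    ext f
    simp only [ContinuousLinearMap.comp_apply]
    have huu : ⟪E σ (A f), E σ (A f)⟫ = ⟪E σ (absA f), E σ (absA f)⟫ := by
      rw [← hproj (A f), ← heqC f, hproj (absA f)]
    have hvv : ⟪A (E σ f), A (E σ f)⟫ = ⟪E σ (absA f), E σ (absA f)⟫ := by
      calc ⟪A (E σ f), A (E σ f)⟫
          = ⟪E σ f, ContinuousLinearMap.adjoint A (A (E σ f))⟫ :=
            (ContinuousLinearMap.adjoint_inner_right A (E σ f) (A (E σ f))).symm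
        _ = ⟪E σ f, absA (absA (E σ f))⟫ := by rw [hsq]
        _ = ⟪E σ f, absA (E σ (absA f))⟫ := by rw [hBc f]
        _ = ⟪E σ f, E σ (absA (absA f))⟫ := by rw [hBc (absA f)]
        _ = ⟪E σ (E σ f), absA (absA f)⟫ := (inner_sa hP (E σ f) (absA (absA f))).symm
        _ = ⟪E σ f, absA (absA f)⟫ := by rw [hP2]
        _ = ⟪absA (E σ f), absA f⟫ := (inner_sa hBsa (E σ f) (absA f)).symm
        _ = ⟪E σ (absA f), absA f⟫ := by rw [hBc f]
        _ = ⟪E σ (absA f), E σ (absA f)⟫ := hproj (absA f)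
    have huv : ⟪E σ (A f), A (E σ f)⟫ = ⟪E σ (absA f), E σ (absA f)⟫ := by
      calc ⟪E σ (A f), A (E σ f)⟫
          = ⟪ContinuousLinearMap.adjoint A (E σ (A f)), E σ f⟫ :=
            (ContinuousLinearMap.adjoint_inner_left A (E σ f) (E σ (A f))).symm
        _ = ⟪absA (E σ (absA f)), E σ f⟫ := by rw [hopx f]
        _ = ⟪E σ (absA f), absA (E σ f)⟫ := inner_sa hBsa (E σ (absA f)) (E σ f)
        _ = ⟪E σ (absA f), E σ (absA f)⟫ := by rw [← hBc f]
    have hvu : ⟪A (E σ f), E σ (A f)⟫ = ⟪E σ (absA f), E σ (absA f)⟫ := by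
      have h1 : ⟪A (E σ f), E σ (A f)⟫ = (starRingEnd ℂ) ⟪E σ (A f), A (E σ f)⟫ :=
        (inner_conj_symm _ _).symm
      rw [h1, huv, inner_conj_symm]
    have hz : ⟪E σ (A f) - A (E σ f), E σ (A f) - A (E σ f)⟫ = 0 := by
      rw [inner_sub_left, inner_sub_right, inner_sub_right, huu, hvv, huv, hvu]
      ring
    exact sub_eq_zero.mp (inner_self_eq_zero (𝕜 := ℂ).mp hz)
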